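/- arXiv:0908.3835 — 2 statements merged into one kernel-verified Lean document; each statement's English description precedes it below -/
import Mathlib

section
/- Let n ≥ 1, let K be a number field, and let x = (x₀,…,x_n) ∈ K^{n+1} with x_i ≠ 0 for every i. Define y = (y₀,…,y_n) by y_i = ∏_{j ≠ i} x_j. Then (1/n)·h(x) ≤ h(y) ≤ n·h(x), where h denotes the logarithmic projective Weil height. -/
open NumberField IsDedekindDomain MvPolynomial
open scoped Classical

/-- The normalized `v`-adic absolute value attached to a finite place (nonzero prime ideal) of
the ring of integers of a number field `L`: `|t|_v = (Norm v)^(-ord_v t)`. -/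
noncomputable def finAbs {L : Type*} [Field L] [NumberField L]
    (v : HeightOneSpectrum (𝓞 L)) (t : L) : ℝ :=
  if ht : t = 0 then 0
  else (Ideal.absNorm v.asIdeal : ℝ) ^
    (Multiplicative.toAdd (WithZero.unzero ((Valuation.ne_zero_iff (v.valuation L)).mpr ht)) : ℤ)

/-- The absolute logarithmic projective Weil height of a (nonzero) tuple of elements of a
number field `L`:
`h(x) = (1/[L:ℚ]) * ( Σ_{v arch} d_v · log max_i |x_i|_v + Σ_{v finite} log max_i |x_i|_v )`.
It is invariant under scaling of the tuple and under finite extension of `L`, hence gives the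
standard Weil height on points of projective space over the algebraic numbers. -/
noncomputable def projHeight {L : Type*} [Field L] [NumberField L]
    {ι : Type*} [Fintype ι] [Nonempty ι] (x : ι → L) : ℝ :=
  (Module.finrank ℚ L : ℝ)⁻¹ *
    ((∑ v : InfinitePlace L, (v.mult : ℝ) * Real.log (⨆ i, v (x i))) +
      ∑ᶠ v : HeightOneSpectrum (𝓞 L), Real.log (⨆ i, finAbs v (x i)))

set_option linter.unusedSectionVars false

namespace PropAux

variable {L : Type*} [Field L] [NumberField L]

lemma absNorm_cast_pos (v : HeightOneSpectrum (𝓞 L)) :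
    (0 : ℝ) < (Ideal.absNorm v.asIdeal : ℝ) := by
  have h : Ideal.absNorm v.asIdeal ≠ 0 := by
    simp [Ideal.absNorm_eq_zero_iff, v.ne_bot]
  exact_mod_cast Nat.pos_of_ne_zero h

lemma finAbs_eq_coe (v : HeightOneSpectrum (𝓞 L)) {t : L} (ht : t ≠ 0) {m : ℤ}
    (hm : v.valuation L t = ((Multiplicative.ofAdd m : Multiplicative ℤ) : WithZero (Multiplicative ℤ))) :
    finAbs v t = (Ideal.absNorm v.asIdeal : ℝ) ^ m := by
  rw [finAbs, dif_neg ht]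
  have h1 : WithZero.unzero ((Valuation.ne_zero_iff (v.valuation L)).mpr ht)
      = Multiplicative.ofAdd m := by
    rw [← WithZero.coe_inj, WithZero.coe_unzero, hm]
  rw [h1, toAdd_ofAdd]

lemma finAbs_pos (v : HeightOneSpectrum (𝓞 L)) {t : L} (ht : t ≠ 0) : 0 < finAbs v t := by
  rw [finAbs, dif_neg ht]
  exact zpow_pos (absNorm_cast_pos v) _

lemma finAbs_mul (v : HeightOneSpectrum (𝓞 L)) {s t : L} (hs : s ≠ 0) (ht : t ≠ 0) :
    finAbs v (s * t) = finAbs v s * finAbs v t := by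
  have hst : s * t ≠ 0 := mul_ne_zero hs ht
  set a := WithZero.unzero ((Valuation.ne_zero_iff (v.valuation L)).mpr hs) with ha
  set b := WithZero.unzero ((Valuation.ne_zero_iff (v.valuation L)).mpr ht) with hb
  have hva : v.valuation L s = (a : WithZero (Multiplicative ℤ)) := (WithZero.coe_unzero _).symm
  have hvb : v.valuation L t = (b : WithZero (Multiplicative ℤ)) := (WithZero.coe_unzero _).symm
  have h1 : v.valuation L (s * t)
      = ((Multiplicative.ofAdd (Multiplicative.toAdd a + Multiplicative.toAdd b) :
          Multiplicative ℤ) : WithZero (Multiplicative ℤ)) := by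
    rw [map_mul, hva, hvb, ← WithZero.coe_mul, ofAdd_add, ofAdd_toAdd, ofAdd_toAdd]
  rw [finAbs_eq_coe v hst h1,
    finAbs_eq_coe v hs (by rw [hva, ofAdd_toAdd]),
    finAbs_eq_coe v ht (by rw [hvb, ofAdd_toAdd]),
    zpow_add₀ (absNorm_cast_pos v).ne']

lemma finAbs_eq_one_of_valuation_eq_one (v : HeightOneSpectrum (𝓞 L)) {t : L} (ht : t ≠ 0)
    (h : v.valuation L t = 1) : finAbs v t = 1 := by
  rw [finAbs_eq_coe v ht (m := 0) (by rw [h]; rfl), zpow_zero]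

lemma finAbs_prod (v : HeightOneSpectrum (𝓞 L)) {ι : Type*} (s : Finset ι) (f : ι → L)
    (hf : ∀ i ∈ s, f i ≠ 0) :
    finAbs v (∏ i ∈ s, f i) = ∏ i ∈ s, finAbs v (f i) := by
  classical
  induction s using Finset.cons_induction with
  | empty =>
      simp [finAbs_eq_one_of_valuation_eq_one v one_ne_zero (map_one _)]
  | cons i s his ih =>
      rw [Finset.prod_cons, Finset.prod_cons,
        finAbs_mul v (hf i (Finset.mem_cons_self i s))
          (Finset.prod_ne_zero_iff.mpr fun j hj => hf j (Finset.mem_cons_of_mem hj)),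
        ih fun j hj => hf j (Finset.mem_cons_of_mem hj)]

end PropAux

section Aux2

variable {L : Type*} [Field L] [NumberField L]
open PropAux

namespace PropAux

lemma algebraMap_ne_zero {a : 𝓞 L} (ha : a ≠ 0) : algebraMap (𝓞 L) L a ≠ 0 := by
  simpa using ha

lemma span_ne_zero {a : 𝓞 L} (ha : a ≠ 0) : (Ideal.span {a} : Ideal (𝓞 L)) ≠ 0 := by
  simpa [Ideal.span_singleton_eq_bot] using ha

lemma finAbs_algebraMap (v : HeightOneSpectrum (𝓞 L)) {a : 𝓞 L} (ha : a ≠ 0) :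
    finAbs v (algebraMap (𝓞 L) L a) = (Ideal.absNorm v.asIdeal : ℝ) ^
      (-((Associates.mk v.asIdeal).count
        (Associates.mk (Ideal.span {a} : Ideal (𝓞 L))).factors : ℤ)) := by
  refine finAbs_eq_coe v (algebraMap_ne_zero ha) ?_
  rw [v.valuation_of_algebraMap, HeightOneSpectrum.intValuation_apply,
    v.intValuationDef_if_neg ha]
  rfl

lemma count_eq_zero_of_not_dvd (v : HeightOneSpectrum (𝓞 L)) {a : 𝓞 L} (ha : a ≠ 0)
    (h : ¬ v.asIdeal ∣ Ideal.span {a}) :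
    (Associates.mk v.asIdeal).count (Associates.mk (Ideal.span {a} : Ideal (𝓞 L))).factors = 0 := by
  by_contra hc
  exact h ((Associates.count_ne_zero_iff_dvd (span_ne_zero ha) v.irreducible).mp hc)

lemma mulSupport_finAbs_algebraMap {a : 𝓞 L} (ha : a ≠ 0) :
    (Function.mulSupport fun v : HeightOneSpectrum (𝓞 L) =>
      finAbs v (algebraMap (𝓞 L) L a)).Finite := by
  refine Set.Finite.subset (Ideal.finite_factors (span_ne_zero ha)) ?_
  intro v hv
  by_contra h
  apply hv
  show finAbs v (algebraMap (𝓞 L) L a) = 1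
  rw [finAbs_algebraMap v ha, count_eq_zero_of_not_dvd v ha h]
  norm_num

lemma mulSupport_finAbs {t : L} (ht : t ≠ 0) :
    (Function.mulSupport fun v : HeightOneSpectrum (𝓞 L) => finAbs v t).Finite := by
  obtain ⟨a, b, hb, hab⟩ := IsFractionRing.div_surjective (A := 𝓞 L) t
  have hb0 : b ≠ 0 := nonZeroDivisors.ne_zero hb
  have hbL : algebraMap (𝓞 L) L b ≠ 0 := algebraMap_ne_zero hb0
  have ha0 : a ≠ 0 := by
    rintro rfl
    simp only [map_zero, zero_div] at hab
    exact ht hab.symm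
  have key : ∀ v : HeightOneSpectrum (𝓞 L),
      finAbs v t * finAbs v (algebraMap (𝓞 L) L b) = finAbs v (algebraMap (𝓞 L) L a) := by
    intro v
    rw [← finAbs_mul v ht hbL]
    congr 1
    rw [← hab]
    field_simp
  refine Set.Finite.subset ((mulSupport_finAbs_algebraMap ha0).union
    (mulSupport_finAbs_algebraMap hb0)) ?_
  intro v hv
  by_contra h
  simp only [Set.mem_union, Function.mem_mulSupport, not_or, not_not] at h
  apply hv
  have := key v
  rw [h.1, h.2, mul_one] at this
  exact this

lemma support_log_finAbs {t : L} (ht : t ≠ 0) :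
    (Function.support fun v : HeightOneSpectrum (𝓞 L) => Real.log (finAbs v t)).Finite := by
  refine Set.Finite.subset (mulSupport_finAbs ht) ?_
  intro v hv
  by_contra h
  simp only [Function.mem_mulSupport, not_not] at h
  apply hv
  simp [h]

lemma finsum_log_finAbs_algebraMap {a : 𝓞 L} (ha : a ≠ 0) :
    ∑ᶠ v : HeightOneSpectrum (𝓞 L), Real.log (finAbs v (algebraMap (𝓞 L) L a))
      = - Real.log (Ideal.absNorm (Ideal.span {a} : Ideal (𝓞 L)) : ℝ) := by
  classical
  set I : Ideal (𝓞 L) := Ideal.span {a} with hIdef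
  have hI : I ≠ 0 := span_ne_zero ha
  have hfin : {v : HeightOneSpectrum (𝓞 L) | v.asIdeal ∣ I}.Finite := Ideal.finite_factors hI
  set S : Finset (HeightOneSpectrum (𝓞 L)) := hfin.toFinset with hSdef
  have hmem : ∀ v : HeightOneSpectrum (𝓞 L), v ∈ S ↔ v.asIdeal ∣ I := by
    intro v; simp [hSdef, Set.Finite.mem_toFinset]
  -- LHS as a finset sum
  have h1 : ∑ᶠ v : HeightOneSpectrum (𝓞 L), Real.log (finAbs v (algebraMap (𝓞 L) L a))
      = ∑ v ∈ S, Real.log (finAbs v (algebraMap (𝓞 L) L a)) := by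
    refine finsum_eq_finset_sum_of_support_subset _ ?_
    intro v hv
    rw [Function.mem_support] at hv
    rw [Finset.mem_coe, hmem]
    by_contra h
    apply hv
    rw [finAbs_algebraMap v ha, count_eq_zero_of_not_dvd v ha h]
    norm_num
  -- absNorm of I as a finset product
  have h2 : (Ideal.absNorm I : ℝ)
      = ∏ v ∈ S, (Ideal.absNorm v.asIdeal : ℝ) ^
          ((Associates.mk v.asIdeal).count (Associates.mk I).factors) := by
    have hfac := Ideal.finprod_heightOneSpectrum_factorization hI
    have h3 : Ideal.absNorm I
        = ∏ᶠ v : HeightOneSpectrum (𝓞 L), Ideal.absNorm (v.maxPowDividing I) := by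
      conv_lhs => rw [← hfac]
      exact ((Ideal.absNorm (S := 𝓞 L)).toMonoidHom.map_finprod
        (Ideal.finite_mulSupport hI))
    have h4 : Ideal.absNorm I
        = ∏ v ∈ S, Ideal.absNorm (v.maxPowDividing I) := by
      rw [h3]
      refine finprod_eq_finset_prod_of_mulSupport_subset _ ?_
      intro v hv
      rw [Function.mem_mulSupport] at hv
      rw [Finset.mem_coe, hmem]
      by_contra h
      apply hv
      unfold IsDedekindDomain.HeightOneSpectrum.maxPowDividing
      rw [count_eq_zero_of_not_dvd v ha (by rwa [← hIdef])]
      simp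
    rw [h4]
    push_cast
    refine Finset.prod_congr rfl ?_
    intro v _
    unfold IsDedekindDomain.HeightOneSpectrum.maxPowDividing
    push_cast [map_pow]
    ring
  rw [h1, h2, Real.log_prod
      (fun v _ => (pow_pos (absNorm_cast_pos v) _).ne')]
  rw [← Finset.sum_neg_distrib]
  refine Finset.sum_congr rfl ?_
  intro v _
  rw [finAbs_algebraMap v ha, Real.log_zpow, Real.log_pow, ← hIdef]
  push_cast
  ring

end PropAux

end Aux2

namespace PropAux

variable {L : Type*} [Field L] [NumberField L]

/-- The sum of all normalized local heights of a single nonzero element. -/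
noncomputable def Phi (t : L) : ℝ :=
  (∑ w : InfinitePlace L, (w.mult : ℝ) * Real.log (w t)) +
    ∑ᶠ v : HeightOneSpectrum (𝓞 L), Real.log (finAbs v t)

lemma sum_mult_log (t : L) (ht : t ≠ 0) :
    ∑ w : InfinitePlace L, (w.mult : ℝ) * Real.log (w t)
      = Real.log ((|Algebra.norm ℚ t| : ℚ) : ℝ) := by
  rw [← NumberField.InfinitePlace.prod_eq_abs_norm t,
    Real.log_prod (fun w _ => (pow_pos (InfinitePlace.pos_iff.mpr ht) _).ne')]
  refine Finset.sum_congr rfl fun w _ => ?_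
  rw [Real.log_pow]

lemma Phi_algebraMap {a : 𝓞 L} (ha : a ≠ 0) : Phi (algebraMap (𝓞 L) L a) = 0 := by
  rw [Phi, sum_mult_log _ (algebraMap_ne_zero ha), finsum_log_finAbs_algebraMap ha]
  have h : (Ideal.absNorm (Ideal.span {a} : Ideal (𝓞 L)) : ℝ)
      = ((|Algebra.norm ℚ (algebraMap (𝓞 L) L a)| : ℚ) : ℝ) := by
    rw [Ideal.absNorm_span_singleton, ← Algebra.coe_norm_int]
    push_cast [Nat.cast_natAbs]
    norm_num
  rw [h]
  ring

lemma Phi_mul {s t : L} (hs : s ≠ 0) (ht : t ≠ 0) : Phi (s * t) = Phi s + Phi t := by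
  rw [Phi, Phi, Phi]
  have hA : ∑ w : InfinitePlace L, (w.mult : ℝ) * Real.log (w (s * t))
      = (∑ w : InfinitePlace L, (w.mult : ℝ) * Real.log (w s)) +
        ∑ w : InfinitePlace L, (w.mult : ℝ) * Real.log (w t) := by
    rw [← Finset.sum_add_distrib]
    refine Finset.sum_congr rfl fun w _ => ?_
    rw [map_mul, Real.log_mul (InfinitePlace.pos_iff.mpr hs).ne'
      (InfinitePlace.pos_iff.mpr ht).ne']
    ring
  have hB : ∑ᶠ v : HeightOneSpectrum (𝓞 L), Real.log (finAbs v (s * t))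
      = (∑ᶠ v : HeightOneSpectrum (𝓞 L), Real.log (finAbs v s)) +
        ∑ᶠ v : HeightOneSpectrum (𝓞 L), Real.log (finAbs v t) := by
    rw [← finsum_add_distrib (support_log_finAbs hs) (support_log_finAbs ht)]
    refine finsum_congr fun v => ?_
    rw [finAbs_mul v hs ht, Real.log_mul (finAbs_pos v hs).ne' (finAbs_pos v ht).ne']
  rw [hA, hB]
  ring

/-- The product formula for number fields. -/
lemma Phi_eq_zero {t : L} (ht : t ≠ 0) : Phi t = 0 := by
  obtain ⟨a, b, hb, hab⟩ := IsFractionRing.div_surjective (A := 𝓞 L) t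
  have hb0 : b ≠ 0 := nonZeroDivisors.ne_zero hb
  have hbL : algebraMap (𝓞 L) L b ≠ 0 := algebraMap_ne_zero hb0
  have ha0 : a ≠ 0 := by
    rintro rfl
    simp only [map_zero, zero_div] at hab
    exact ht hab.symm
  have key : t * algebraMap (𝓞 L) L b = algebraMap (𝓞 L) L a := by
    rw [← hab]; field_simp
  have := Phi_mul ht hbL
  rw [key, Phi_algebraMap ha0, Phi_algebraMap hb0] at this
  linarith

end PropAux

namespace PropAux

variable {L : Type*} [Field L] [NumberField L]
variable {ι : Type*} [Fintype ι] [Nonempty ι]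

lemma exists_sup_eq (f : ι → ℝ) : ∃ i, (⨆ j, f j) = f i ∧ ∀ j, f j ≤ f i := by
  obtain ⟨i, hi⟩ := Finite.exists_max f
  exact ⟨i, le_antisymm (ciSup_le hi)
    (le_ciSup (Set.Finite.bddAbove (Set.finite_range f)) i), hi⟩

lemma sup_pos {f : ι → ℝ} (hf : ∀ i, 0 < f i) : 0 < ⨆ i, f i := by
  obtain ⟨i, hi, _⟩ := exists_sup_eq f
  rw [hi]; exact hf i

lemma sup_le_of_forall {f : ι → ℝ} {c : ℝ} (h : ∀ i, f i ≤ c) : (⨆ i, f i) ≤ c :=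
  ciSup_le h

lemma support_log_sup_subset (x : ι → L) (hx : ∀ i, x i ≠ 0) :
    (Function.support fun v : HeightOneSpectrum (𝓞 L) => Real.log (⨆ i, finAbs v (x i)))
      ⊆ ⋃ i, Function.mulSupport fun v => finAbs v (x i) := by
  intro v hv
  by_contra h
  simp only [Set.mem_iUnion, Function.mem_mulSupport, not_exists, not_not] at h
  apply hv
  have : (⨆ i, finAbs v (x i)) = 1 := by
    simp only [h]
    exact ciSup_const
  simp [this]

lemma support_log_sup_finite (x : ι → L) (hx : ∀ i, x i ≠ 0) :
    (Function.support fun v : HeightOneSpectrum (𝓞 L) =>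
      Real.log (⨆ i, finAbs v (x i))).Finite :=
  Set.Finite.subset (Set.finite_iUnion fun i => mulSupport_finAbs (hx i))
    (support_log_sup_subset x hx)

lemma projHeight_scale (c : L) (hc : c ≠ 0) (x : ι → L) (hx : ∀ i, x i ≠ 0) :
    projHeight (fun i => c * x i) = projHeight x := by
  rw [projHeight, projHeight]
  congr 1
  have hA : ∀ w : InfinitePlace L,
      Real.log (⨆ i, w (c * x i)) = Real.log (w c) + Real.log (⨆ i, w (x i)) := by
    intro w
    have h1 : (⨆ i, w (c * x i)) = w c * ⨆ i, w (x i) := by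
      simp_rw [map_mul]
      exact (Real.mul_iSup_of_nonneg (w.1.nonneg c) _).symm
    rw [h1, Real.log_mul (InfinitePlace.pos_iff.mpr hc).ne'
      (sup_pos fun i => InfinitePlace.pos_iff.mpr (hx i)).ne']
  have hB : ∀ v : HeightOneSpectrum (𝓞 L),
      Real.log (⨆ i, finAbs v (c * x i))
        = Real.log (finAbs v c) + Real.log (⨆ i, finAbs v (x i)) := by
    intro v
    have h1 : (⨆ i, finAbs v (c * x i)) = finAbs v c * ⨆ i, finAbs v (x i) := by
      rw [iSup_congr fun i => finAbs_mul v hc (hx i)]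
      exact (Real.mul_iSup_of_nonneg (finAbs_pos v hc).le _).symm
    rw [h1, Real.log_mul (finAbs_pos v hc).ne'
      (sup_pos fun i => finAbs_pos v (hx i)).ne']
  calc (∑ w : InfinitePlace L, (w.mult : ℝ) * Real.log (⨆ i, w (c * x i))) +
        ∑ᶠ v : HeightOneSpectrum (𝓞 L), Real.log (⨆ i, finAbs v (c * x i))
      = ((∑ w : InfinitePlace L, (w.mult : ℝ) * Real.log (w c)) +
          ∑ w : InfinitePlace L, (w.mult : ℝ) * Real.log (⨆ i, w (x i))) +
        ((∑ᶠ v : HeightOneSpectrum (𝓞 L), Real.log (finAbs v c)) +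
          ∑ᶠ v : HeightOneSpectrum (𝓞 L), Real.log (⨆ i, finAbs v (x i))) := by
        congr 1
        · rw [← Finset.sum_add_distrib]
          refine Finset.sum_congr rfl fun w _ => ?_
          rw [hA w]; ring
        · rw [← finsum_add_distrib (support_log_finAbs hc) (support_log_sup_finite x hx)]
          exact finsum_congr hB
    _ = (∑ w : InfinitePlace L, (w.mult : ℝ) * Real.log (⨆ i, w (x i))) +
          ∑ᶠ v : HeightOneSpectrum (𝓞 L), Real.log (⨆ i, finAbs v (x i)) := by
        have := Phi_eq_zero hc
        rw [Phi] at this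
        linarith

end PropAux

namespace PropAux

variable {L : Type*} [Field L] [NumberField L]

lemma log_sup_le {ι : Type*} [Fintype ι] [Nonempty ι] {f g : ι → ℝ} (n : ℕ)
    (hf : ∀ i, 0 < f i) (hg : ∀ i, 0 < g i)
    (hb : ∀ i, f i ≤ (⨆ j, g j) ^ n) :
    Real.log (⨆ i, f i) ≤ n * Real.log (⨆ j, g j) := by
  have h1 : 0 < ⨆ i, f i := sup_pos hf
  have h2 : (⨆ i, f i) ≤ (⨆ j, g j) ^ n := ciSup_le hb
  calc Real.log (⨆ i, f i) ≤ Real.log ((⨆ j, g j) ^ n) := Real.log_le_log h1 h2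
    _ = n * Real.log (⨆ j, g j) := Real.log_pow _ n

lemma prod_erase_le_sup_pow {n : ℕ} {u : Fin (n + 1) → ℝ} (hu : ∀ j, 0 < u j)
    (i : Fin (n + 1)) :
    ∏ j ∈ Finset.univ.erase i, u j ≤ (⨆ j, u j) ^ n := by
  have hcard : (Finset.univ.erase i).card = n := by
    rw [Finset.card_erase_of_mem (Finset.mem_univ i)]
    simp
  calc ∏ j ∈ Finset.univ.erase i, u j
      ≤ ∏ _j ∈ Finset.univ.erase i, (⨆ j, u j) :=
        Finset.prod_le_prod (fun j _ => (hu j).le)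
          (fun j _ => le_ciSup (Set.Finite.bddAbove (Set.finite_range u)) j)
    _ = (⨆ j, u j) ^ n := by rw [Finset.prod_const, hcard]

lemma projHeight_prod_erase_le (n : ℕ) (x : Fin (n + 1) → L) (hx : ∀ i, x i ≠ 0) :
    projHeight (fun i => ∏ j ∈ Finset.univ.erase i, x j) ≤ n * projHeight x := by
  classical
  set y : Fin (n + 1) → L := fun i => ∏ j ∈ Finset.univ.erase i, x j with hy_def
  have hy : ∀ i, y i ≠ 0 := fun i =>
    Finset.prod_ne_zero_iff.mpr fun j _ => hx j
  -- archimedean estimate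
  have hA : ∀ w : InfinitePlace L,
      Real.log (⨆ i, w (y i)) ≤ n * Real.log (⨆ i, w (x i)) := by
    intro w
    refine log_sup_le n (fun i => InfinitePlace.pos_iff.mpr (hy i))
      (fun i => InfinitePlace.pos_iff.mpr (hx i)) (fun i => ?_)
    have hmap : w (y i) = ∏ j ∈ Finset.univ.erase i, w (x j) := map_prod w.1 _ _
    rw [hmap]
    exact prod_erase_le_sup_pow (fun j => InfinitePlace.pos_iff.mpr (hx j)) i
  -- non-archimedean estimate
  have hB : ∀ v : HeightOneSpectrum (𝓞 L),
      Real.log (⨆ i, finAbs v (y i)) ≤ n * Real.log (⨆ i, finAbs v (x i)) := by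
    intro v
    refine log_sup_le n (fun i => finAbs_pos v (hy i)) (fun i => finAbs_pos v (hx i))
      (fun i => ?_)
    have hmap : finAbs v (y i) = ∏ j ∈ Finset.univ.erase i, finAbs v (x j) :=
      finAbs_prod v _ _ fun j _ => hx j
    rw [hmap]
    exact prod_erase_le_sup_pow (fun j => finAbs_pos v (hx j)) i
  -- assemble
  set A : ℝ := ∑ w : InfinitePlace L, (w.mult : ℝ) * Real.log (⨆ i, w (x i)) with hA_def
  set B : ℝ := ∑ᶠ v : HeightOneSpectrum (𝓞 L), Real.log (⨆ i, finAbs v (x i)) with hB_def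
  set A' : ℝ := ∑ w : InfinitePlace L, (w.mult : ℝ) * Real.log (⨆ i, w (y i)) with hA'_def
  set B' : ℝ := ∑ᶠ v : HeightOneSpectrum (𝓞 L), Real.log (⨆ i, finAbs v (y i)) with hB'_def
  have hAle : A' ≤ n * A := by
    rw [hA_def, hA'_def, Finset.mul_sum]
    refine Finset.sum_le_sum fun w _ => ?_
    calc (w.mult : ℝ) * Real.log (⨆ i, w (y i))
        ≤ (w.mult : ℝ) * (n * Real.log (⨆ i, w (x i))) :=
          mul_le_mul_of_nonneg_left (hA w) (Nat.cast_nonneg _)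
      _ = n * ((w.mult : ℝ) * Real.log (⨆ i, w (x i))) := by ring
  have hBle : B' ≤ n * B := by
    have hfinU : (⋃ i, Function.mulSupport fun v : HeightOneSpectrum (𝓞 L) =>
        finAbs v (x i)).Finite := Set.finite_iUnion fun i => mulSupport_finAbs (hx i)
    set T : Finset (HeightOneSpectrum (𝓞 L)) := hfinU.toFinset with hT_def
    have hT : ∀ v : HeightOneSpectrum (𝓞 L), v ∉ T → ∀ i, finAbs v (x i) = 1 := by
      intro v hv i
      by_contra h
      exact hv (hfinU.mem_toFinset.mpr (Set.mem_iUnion.mpr ⟨i, h⟩))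
    have hsubx : (Function.support fun v : HeightOneSpectrum (𝓞 L) =>
        Real.log (⨆ i, finAbs v (x i))) ⊆ ↑T := by
      intro v hv
      rw [Finset.mem_coe]
      by_contra h
      apply hv
      have h1 : (⨆ i, finAbs v (x i)) = 1 := by
        simp only [hT v h]
        exact ciSup_const
      simp [h1]
    have hsuby : (Function.support fun v : HeightOneSpectrum (𝓞 L) =>
        Real.log (⨆ i, finAbs v (y i))) ⊆ ↑T := by
      intro v hv
      rw [Finset.mem_coe]
      by_contra h
      apply hv
      have hy1 : ∀ i, finAbs v (y i) = 1 := by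
        intro i
        rw [finAbs_prod v _ _ fun j _ => hx j]
        exact Finset.prod_eq_one fun j _ => hT v h j
      have h1 : (⨆ i, finAbs v (y i)) = 1 := by
        simp only [hy1]
        exact ciSup_const
      simp [h1]
    rw [hB_def, hB'_def, finsum_eq_finset_sum_of_support_subset _ hsuby,
      finsum_eq_finset_sum_of_support_subset _ hsubx, Finset.mul_sum]
    exact Finset.sum_le_sum fun v _ => hB v
  rw [projHeight, projHeight]
  have hd : (0 : ℝ) ≤ (Module.finrank ℚ L : ℝ)⁻¹ := by positivity
  calc (Module.finrank ℚ L : ℝ)⁻¹ * (A' + B')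
      ≤ (Module.finrank ℚ L : ℝ)⁻¹ * (n * A + n * B) :=
        mul_le_mul_of_nonneg_left (by linarith) hd
    _ = n * ((Module.finrank ℚ L : ℝ)⁻¹ * (A + B)) := by ring

end PropAux

/-- **Proposition 4.3 of the paper (two-sided estimate).**  For a tuple `x ∈ K^{n+1}` with all
coordinates nonzero, the tuple `y` with `yᵢ = ∏_{j ≠ i} xⱼ` (representing the image of `[x]`
under `[X₀ : ⋯ : Xₙ] ↦ [X₀⁻¹ : ⋯ : Xₙ⁻¹]`) satisfies `(1/n)·h(x) ≤ h(y) ≤ n·h(x)`. -/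
theorem height_of_inverted_tuple (K : Type*) [Field K] [NumberField K] (n : ℕ) (hn : 1 ≤ n)
    (x : Fin (n + 1) → K) (hx : ∀ i, x i ≠ 0) :
    (1 / n : ℝ) * projHeight x ≤
        projHeight (fun i => ∏ j ∈ Finset.univ.erase i, x j) ∧
      projHeight (fun i => ∏ j ∈ Finset.univ.erase i, x j) ≤ n * projHeight x := by
  classical
  refine ⟨?_, PropAux.projHeight_prod_erase_le n x hx⟩
  set y : Fin (n + 1) → K := fun i => ∏ j ∈ Finset.univ.erase i, x j with hy_def
  have hy : ∀ i, y i ≠ 0 := fun i => Finset.prod_ne_zero_iff.mpr fun j _ => hx j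
  set P : K := ∏ j, x j with hP_def
  have hP0 : P ≠ 0 := Finset.prod_ne_zero_iff.mpr fun j _ => hx j
  have hyi : ∀ i, x i * y i = P := fun i => Finset.mul_prod_erase _ _ (Finset.mem_univ i)
  have hyinv : ∀ i, y i = P * (x i)⁻¹ := by
    intro i
    rw [← hyi i, mul_comm (x i) (y i), mul_assoc, mul_inv_cancel₀ (hx i), mul_one]
  have hyP : ∏ j, y j = P ^ (n + 1) * P⁻¹ := by
    calc ∏ j, y j = ∏ j, (P * (x j)⁻¹) := Finset.prod_congr rfl fun j _ => hyinv j
      _ = P ^ (n + 1) * (∏ j, x j)⁻¹ := by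
          rw [Finset.prod_mul_distrib, Finset.prod_const, Finset.card_univ, Fintype.card_fin,
            ← Finset.prod_inv_distrib]
      _ = P ^ (n + 1) * P⁻¹ := by rw [← hP_def]
  set c : K := P ^ (n + 1) * P⁻¹ * P⁻¹ with hc_def
  have hc : c ≠ 0 := by
    rw [hc_def]
    exact mul_ne_zero (mul_ne_zero (pow_ne_zero _ hP0) (inv_ne_zero hP0)) (inv_ne_zero hP0)
  have hz : (fun i => ∏ j ∈ Finset.univ.erase i, y j) = fun i => c * x i := by
    funext i
    have h2 : y i * ∏ j ∈ Finset.univ.erase i, y j = ∏ j, y j :=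
      Finset.mul_prod_erase _ _ (Finset.mem_univ i)
    have h3 : ∏ j ∈ Finset.univ.erase i, y j = (y i)⁻¹ * ∏ j, y j := by
      rw [← h2, inv_mul_cancel_left₀ (hy i)]
    rw [h3, hyP, hyinv i, hc_def]
    field_simp
  have hkey := PropAux.projHeight_prod_erase_le n y hy
  rw [hz, PropAux.projHeight_scale c hc x hx] at hkey
  have hn0 : (n : ℝ) ≠ 0 := by
    have : (0:ℝ) < n := by exact_mod_cast hn
    exact this.ne'
  calc (1 / n : ℝ) * projHeight x ≤ (1 / n : ℝ) * (n * projHeight y) := by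
        apply mul_le_mul_of_nonneg_left hkey
        positivity
    _ = projHeight y := by field_simp
end

section
/- For all integers n ≥ 2 and d ≥ 2 the following holds: there exists a dominant rational self-map φ = [φ₀ : ⋯ : φ_n] : ℙⁿ ⇢ ℙⁿ of degree d defined over ℚ (given by coprime homogeneous polynomials φ₀,…,φ_n ∈ ℚ[X₀,…,X_n] of degree d that are algebraically independent over ℚ) such that for every number field K, every nonzero homogeneous polynomial g ∈ K[X₀,…,X_n], every ε > 0, and every B > 0, there is a finite extension L/K and a nonzero x ∈ L^{n+1} with g(x) ≠ 0, (φ₀(x),…,φ_n(x)) ≠ 0, h(x) > B, and h(φ₀(x),…,φ_n(x)) ≤ (d^{−(n−1)} + ε)·h(x). In other words, the height expansion coefficient satisfies μ(φ) ≤ d^{−(n−1)}, and hence μ̄_d(ℙⁿ) ≤ 1/d^{n−1}. -/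
open NumberField IsDedekindDomain MvPolynomial
open scoped Classical

def Ygen (d : ℕ) {R : Type*} [CommRing R] (v : ℕ → R) : ℕ → R
  | 0 => 1
  | (j+1) => if j = 0 then v 0 else v j - Ygen d v j ^ d

lemma Ygen_one {d : ℕ} {R : Type*} [CommRing R] (v : ℕ → R) : Ygen d v 1 = v 0 := by
  simp [Ygen]

lemma Ygen_succ {d : ℕ} {R : Type*} [CommRing R] (v : ℕ → R) {j : ℕ} (hj : j ≠ 0) :
    Ygen d v (j + 1) = v j - Ygen d v j ^ d := by
  simp [Ygen, hj]

lemma map_Ygen {d : ℕ} {R S : Type*} [CommRing R] [CommRing S] (f : R →+* S) (v : ℕ → R) :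
    ∀ i, f (Ygen d v i) = Ygen d (fun j => f (v j)) i := by
  intro i
  induction i with
  | zero => simp [Ygen]
  | succ j ih =>
    by_cases hj : j = 0
    · subst hj; simp [Ygen]
    · rw [Ygen_succ v hj, Ygen_succ _ hj, map_sub, map_pow, ih]

-- nonzero polynomial has nonzero value at an integer point
theorem exists_int_eval_ne_zero {K : Type*} [Field K] [CharZero K] :
    ∀ (m : ℕ) (p : MvPolynomial (Fin m) K), p ≠ 0 →
      ∃ u : Fin m → ℤ, eval (fun i => ((u i : ℤ) : K)) p ≠ 0 := by
  intro m
  induction m with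
  | zero =>
    intro p hp
    refine ⟨fun i => 0, ?_⟩
    obtain ⟨c, rfl⟩ := MvPolynomial.C_surjective (Fin 0) p
    simpa using fun h => hp (by rw [h, map_zero])
  | succ m ih =>
    intro p hp
    set q := finSuccEquiv K m p with hq
    have hq0 : q ≠ 0 := by
      intro h
      exact hp (by simpa [hq] using (map_eq_zero_iff _ (AlgEquiv.injective _)).mp h)
    have hlc : q.leadingCoeff ≠ 0 := Polynomial.leadingCoeff_ne_zero.mpr hq0
    obtain ⟨s, hs⟩ := ih q.leadingCoeff hlc
    set f : MvPolynomial (Fin m) K →+* K := (eval (fun i => ((s i : ℤ) : K))) with hf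
    have hq' : q.map f ≠ 0 := by
      intro h
      have : (q.map f).coeff q.natDegree = 0 := by rw [h]; simp
      rw [Polynomial.coeff_map] at this
      exact hs this
    have hroots : {x : K | (q.map f).IsRoot x}.Finite := Polynomial.finite_setOf_isRoot hq'
    have hbad : {a : ℤ | (q.map f).eval ((a : ℤ) : K) = 0}.Finite := by
      apply Set.Finite.preimage _ hroots
      exact Set.injOn_of_injective Int.cast_injective
    obtain ⟨a, ha⟩ := (hbad.infinite_compl).nonempty
    refine ⟨Fin.cons a s, ?_⟩
    have hpt : (fun i : Fin (m+1) => (((Fin.cons a s : Fin (m+1) → ℤ) i : ℤ) : K))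
        = Fin.cons ((a : ℤ) : K) (fun i => ((s i : ℤ) : K)) := by
      funext i
      refine Fin.cases ?_ (fun j => ?_) i <;> simp
    rw [hpt, MvPolynomial.eval_eq_eval_mv_eval']
    exact ha

theorem exists_nat_ge_eval_ne_zero {K : Type*} [Field K] [CharZero K]
    (q : Polynomial K) (hq : q ≠ 0) (T : ℝ) :
    ∃ t : ℕ, T ≤ (t : ℝ) ∧ q.eval ((t : ℕ) : K) ≠ 0 := by
  have hroots : {x : K | q.IsRoot x}.Finite := Polynomial.finite_setOf_isRoot hq
  have hbad : {t : ℕ | q.eval ((t : ℕ) : K) = 0}.Finite := by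
    apply Set.Finite.preimage _ hroots
    exact Set.injOn_of_injective Nat.cast_injective
  obtain ⟨b, hb⟩ := hbad.bddAbove
  refine ⟨max (b + 1) ⌈T⌉₊, ?_, ?_⟩
  · calc T ≤ (⌈T⌉₊ : ℝ) := Nat.le_ceil T
      _ ≤ _ := by exact_mod_cast Nat.le_max_right _ _
  · intro h
    have := hb h
    omega

lemma eval_scale {R : Type*} {σ : Type*} [CommRing R] {g : MvPolynomial σ R} {e : ℕ}
    (hg : g.IsHomogeneous e) (c : R) (x : σ → R) :
    eval (fun i => c * x i) g = c ^ e * eval x g := by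
  rw [eval_eq, eval_eq, Finset.mul_sum]
  apply Finset.sum_congr rfl
  intro d hd
  have hdeg : (∑ i ∈ d.support, d i) = e := by
    have h1 := hg (mem_support_iff.mp hd)
    change (Finsupp.weight (fun _ => 1)) d = e at h1
    rw [← Finsupp.degree_eq_weight_one] at h1
    simpa [Finsupp.degree_apply] using h1
  have : (∏ i ∈ d.support, (c * x i) ^ d i)
      = c ^ e * ∏ i ∈ d.support, x i ^ d i := by
    simp_rw [mul_pow]
    rw [Finset.prod_mul_distrib, Finset.prod_pow_eq_pow_sum, hdeg]
  rw [this]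
  ring

section pieces
variable {L : Type*} [Field L] [NumberField L] (v : HeightOneSpectrum (𝓞 L))

lemma finAbs_one : finAbs v ((1 : L)) = 1 := by
  rw [finAbs, dif_neg (one_ne_zero)]
  have h := (Valuation.ne_zero_iff (v.valuation L)).mpr (one_ne_zero (α := L))
  have h2 : WithZero.unzero h = (1 : Multiplicative ℤ) := by
    apply WithZero.coe_inj.mp
    rw [WithZero.coe_unzero, WithZero.coe_one]
    exact map_one _
  rw [h2]; simp

lemma one_le_absNorm : (1:ℝ) ≤ (Ideal.absNorm v.asIdeal : ℝ) := by
  have h0 : Ideal.absNorm v.asIdeal ≠ 0 := by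
    rw [Ne, Ideal.absNorm_eq_zero_iff]; exact v.ne_bot
  exact_mod_cast Nat.one_le_iff_ne_zero.mpr h0

lemma finAbs_intCast_le_one (m : ℤ) : finAbs v ((m : ℤ) : L) ≤ 1 := by
  by_cases hm : ((m : ℤ) : L) = 0
  · rw [finAbs, dif_pos hm]; norm_num
  · rw [finAbs, dif_neg hm]
    apply zpow_le_one_of_nonpos₀ (one_le_absNorm v)
    have hval : v.valuation L ((m : ℤ) : L) ≤ 1 := by
      have h3 : ((m : ℤ) : L) = algebraMap (𝓞 L) L ((m : ℤ) : 𝓞 L) := by simp [map_intCast]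
      rw [h3]; exact v.valuation_le_one _
    set h := (Valuation.ne_zero_iff (v.valuation L)).mpr hm
    rw [← WithZero.coe_unzero h, ← WithZero.coe_one, WithZero.coe_le_coe] at hval
    exact Multiplicative.toAdd_le.mpr hval

lemma infPlace_intCast (w : InfinitePlace L) (m : ℤ) : w ((m : ℤ) : L) = |(m : ℝ)| := by
  rw [← NumberField.InfinitePlace.norm_embedding_eq]
  rw [map_intCast]
  simp

end pieces

theorem projHeight_intCast {L : Type*} [Field L] [NumberField L] {m : ℕ}
    (ξ : Fin (m + 1) → ℤ) (j₀ : Fin (m + 1)) (h1 : ξ j₀ = 1) :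
    projHeight (fun i => ((ξ i : ℤ) : L)) = Real.log (⨆ i, |(ξ i : ℝ)|) := by
  have hfin : ∀ v : HeightOneSpectrum (𝓞 L),
      Real.log (⨆ i, finAbs v ((ξ i : ℤ) : L)) = 0 := by
    intro v
    have hsup : (⨆ i, finAbs v ((ξ i : ℤ) : L)) = 1 := by
      apply le_antisymm
      · exact ciSup_le fun i => finAbs_intCast_le_one v (ξ i)
      · have := le_ciSup (Set.Finite.bddAbove (Set.finite_range
            (fun i => finAbs v ((ξ i : ℤ) : L)))) j₀
        rw [h1] at this
        simpa [finAbs_one v] using this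
    rw [hsup, Real.log_one]
  have harch : ∀ w : InfinitePlace L,
      (⨆ i, w ((ξ i : ℤ) : L)) = ⨆ i, |(ξ i : ℝ)| := by
    intro w
    exact iSup_congr fun i => infPlace_intCast w (ξ i)
  rw [projHeight]
  have h2 : (∑ᶠ v : HeightOneSpectrum (𝓞 L),
      Real.log (⨆ i, finAbs v ((ξ i : ℤ) : L))) = 0 := by
    rw [finsum_congr hfin, finsum_zero]
  rw [h2, add_zero]
  have h3 : (∑ v : InfinitePlace L, (v.mult : ℝ) * Real.log (⨆ i, v ((ξ i : ℤ) : L)))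
      = (Module.finrank ℚ L : ℝ) * Real.log (⨆ i, |(ξ i : ℝ)|) := by
    rw [Finset.sum_congr rfl (fun w _ => by rw [harch w])]
    rw [← Finset.sum_mul]
    congr 1
    rw [← NumberField.InfinitePlace.sum_mult_eq]
    push_cast; ring
  rw [h3, ← mul_assoc, inv_mul_cancel₀, one_mul]
  exact Nat.cast_ne_zero.mpr Module.finrank_pos.ne'

noncomputable def phiMap (n d : ℕ) : Fin (n + 1) → MvPolynomial (Fin (n + 1)) ℚ := fun i =>
  if (i : ℕ) = 0 then X 0 ^ d
  else if (i : ℕ) = 1 then X 0 ^ (d - 1) * X i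
  else X 0 ^ (d - 1) * X i + X ⟨(i : ℕ) - 1, lt_of_le_of_lt (Nat.sub_le _ _) i.isLt⟩ ^ d

lemma aeval_phiMap {n d : ℕ} (hd : 2 ≤ d) {F : Type*} [CommRing F] [Algebra ℚ F]
    (v : ℕ → F) (s : F) (i : Fin (n + 1)) :
    aeval (fun j : Fin (n + 1) => if (j : ℕ) = 0 then s else s * Ygen d v (j : ℕ))
        (phiMap n d i)
      = s ^ d * (if (i : ℕ) = 0 then 1 else v ((i : ℕ) - 1)) := by
  have hs : s ^ (d - 1) * s = s ^ d := by
    rw [← pow_succ, Nat.sub_add_cancel (by omega)]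
  rw [phiMap]
  by_cases h0 : (i : ℕ) = 0
  · rw [if_pos h0, if_pos h0, map_pow, aeval_X]
    simp
  · by_cases h1 : (i : ℕ) = 1
    · rw [if_neg h0, if_pos h1, if_neg h0, map_mul, map_pow, aeval_X, aeval_X]
      simp only [Fin.val_zero, eq_self_iff_true, if_true, h1, Ygen_one]
      norm_num
      rw [← mul_assoc, hs]
    · rw [if_neg h0, if_neg h1, if_neg h0]
      simp only [map_add, map_mul, map_pow, aeval_X, Fin.val_zero, eq_self_iff_true, if_true,
        if_neg h0]
      have hne : (i : ℕ) - 1 ≠ 0 := by omega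
      rw [if_neg hne]
      have hofs : (i : ℕ) = ((i : ℕ) - 1) + 1 := by omega
      have hY : Ygen d v (i : ℕ) = v ((i : ℕ) - 1) - Ygen d v ((i : ℕ) - 1) ^ d := by
        conv_lhs => rw [hofs]
        rw [Ygen_succ v hne]
      rw [hY, mul_pow]
      simp only [← hs]
      ring

lemma phiMap_isHomogeneous {n d : ℕ} (hd : 2 ≤ d) (i : Fin (n + 1)) :
    (phiMap n d i).IsHomogeneous d := by
  have hX0 : (X (0 : Fin (n+1)) ^ (d-1) : MvPolynomial (Fin (n+1)) ℚ).IsHomogeneous (d-1) := by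
    simpa using (isHomogeneous_X ℚ (0 : Fin (n+1))).pow (d-1)
  have hmul : ∀ j : Fin (n+1),
      (X (0 : Fin (n+1)) ^ (d-1) * X j : MvPolynomial (Fin (n+1)) ℚ).IsHomogeneous d := by
    intro j
    have := hX0.mul (isHomogeneous_X ℚ j)
    rwa [Nat.sub_add_cancel (by omega : 1 ≤ d)] at this
  rw [phiMap]
  split_ifs with h0 h1
  · simpa using (isHomogeneous_X ℚ (0 : Fin (n+1))).pow d
  · exact hmul i
  · exact (hmul i).add (by simpa using (isHomogeneous_X ℚ _).pow d)

lemma prime_X0 {n : ℕ} : Prime (X (0 : Fin (n + 1)) : MvPolynomial (Fin (n + 1)) ℚ) := by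
  rw [← MulEquiv.prime_iff (finSuccEquiv ℚ n).toMulEquiv]
  have h : (finSuccEquiv ℚ n).toMulEquiv (X 0) = (Polynomial.X : Polynomial (MvPolynomial (Fin n) ℚ)) := by
    simpa using (finSuccEquiv_X_zero (R := ℚ) (n := n))
  rw [h]
  exact Polynomial.prime_X

lemma phiMap_coprime {n d : ℕ} (hn : 2 ≤ n) (hd : 2 ≤ d)
    (p : MvPolynomial (Fin (n + 1)) ℚ) (hp : ∀ i, p ∣ phiMap n d i) : IsUnit p := by
  by_contra hu
  have hphi0 : phiMap n d 0 = X 0 ^ d := by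
    rw [phiMap]; simp
  have hpne : p ≠ 0 := by
    intro h
    have h2 := hp 0
    rw [h, hphi0, zero_dvd_iff] at h2
    exact pow_ne_zero d (X_ne_zero _) h2
  obtain ⟨q, hqirr, hqdvd⟩ := WfDvdMonoid.exists_irreducible_factor hu hpne
  have hqprime : Prime q := (UniqueFactorizationMonoid.irreducible_iff_prime).mp hqirr
  have h0 : q ∣ X 0 ^ d := hqdvd.trans (by rw [← hphi0]; exact hp 0)
  have hq0 : q ∣ X 0 := hqprime.dvd_of_dvd_pow h0
  have hX0q : (X 0 : MvPolynomial (Fin (n+1)) ℚ) ∣ q := by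
    obtain ⟨c, hc⟩ := hq0
    rcases (prime_X0.irreducible).isUnit_or_isUnit hc with h | h
    · exact absurd h hqirr.1
    · refine ⟨(h.unit⁻¹ : _), ?_⟩
      rw [hc, mul_assoc]
      rw [IsUnit.mul_val_inv h, mul_one]
  -- the last coordinate
  have hnval : ((⟨n, Nat.lt_succ_self n⟩ : Fin (n+1)) : ℕ) = n := rfl
  have hphin : phiMap n d ⟨n, Nat.lt_succ_self n⟩
      = X 0 ^ (d-1) * X ⟨n, Nat.lt_succ_self n⟩
        + X (⟨n - 1, by omega⟩ : Fin (n+1)) ^ d := by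
    rw [phiMap]
    rw [if_neg (by omega), if_neg (by omega)]
  have hdvdn : (X 0 : MvPolynomial (Fin (n+1)) ℚ) ∣ phiMap n d ⟨n, Nat.lt_succ_self n⟩ :=
    hX0q.trans (hqdvd.trans (hp _))
  -- kill X 0
  let ρ : MvPolynomial (Fin (n+1)) ℚ →ₐ[ℚ] MvPolynomial (Fin (n+1)) ℚ :=
    aeval (fun j : Fin (n+1) => if j = 0 then 0 else X j)
  have hmap := _root_.map_dvd ρ hdvdn
  have hρ0 : ρ (X 0) = 0 := by simp [ρ]
  rw [hρ0, zero_dvd_iff, hphin] at hmap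
  have hcalc : ρ (X 0 ^ (d-1) * X ⟨n, Nat.lt_succ_self n⟩
      + X (⟨n - 1, by omega⟩ : Fin (n+1)) ^ d)
      = X (⟨n - 1, by omega⟩ : Fin (n+1)) ^ d := by
    simp only [map_add, map_mul, map_pow, aeval_X, ρ]
    rw [if_neg (show ¬((⟨n, Nat.lt_succ_self n⟩ : Fin (n+1)) = 0) by
      intro h; have := congrArg Fin.val h; simp at this; omega)]
    rw [if_neg (show ¬((⟨n - 1, by omega⟩ : Fin (n+1)) = 0) by
      intro h; have := congrArg Fin.val h; simp at this; omega)]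
    simp [zero_pow (show d - 1 ≠ 0 by omega)]
  rw [hcalc] at hmap
  exact pow_ne_zero d (X_ne_zero _) hmap

lemma aeval_eq_eval' {K : Type*} [CommSemiring K] {σ : Type*} (x : σ → K)
    (p : MvPolynomial σ K) : aeval x p = eval x p := by simp [aeval_def]

lemma eval_aeval' {K : Type*} [CommSemiring K] {σ τ : Type*} (a : σ → K)
    (ψ : τ → MvPolynomial σ K) (g : MvPolynomial τ K) :
    eval a (aeval ψ g) = eval (fun i => eval a (ψ i)) g := by
  have h := AlgHom.congr_fun (MvPolynomial.comp_aeval (R := K)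
    (φ := (aeval a : MvPolynomial σ K →ₐ[K] K)) (f := ψ)) g
  simpa [aeval_eq_eval'] using h

lemma phiMap_algIndep {n d : ℕ} (hn : 2 ≤ n) (hd : 2 ≤ d) :
    AlgebraicIndependent ℚ (phiMap n d) := by
  rw [algebraicIndependent_iff]
  intro P hP
  classical
  set Zf : (Fin n → ℚ) → ℕ → ℚ := fun z j => if h : j < n then z ⟨j, h⟩ else 0 with hZf
  have key : ∀ (s : ℚ) (z : Fin n → ℚ),
      eval (fun i : Fin (n+1) => s ^ d * (if (i : ℕ) = 0 then 1 else Zf z ((i : ℕ) - 1))) P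
        = 0 := by
    intro s z
    have h1 : eval (fun j : Fin (n+1) => if (j : ℕ) = 0 then s else s * Ygen d (Zf z) (j : ℕ))
        (aeval (phiMap n d) P) = 0 := by rw [hP, map_zero]
    rw [eval_aeval'] at h1
    have h2 : (fun i : Fin (n+1) => s ^ d * (if (i : ℕ) = 0 then 1 else Zf z ((i : ℕ) - 1)))
        = (fun i => eval (fun j : Fin (n+1) => if (j : ℕ) = 0 then s
            else s * Ygen d (Zf z) (j : ℕ)) (phiMap n d i)) := by
      funext i
      rw [← aeval_eq_eval', aeval_phiMap hd]
    rw [h2]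
    exact h1
  have key2 : ∀ (c : ℚ) (z : Fin n → ℚ),
      eval (fun i : Fin (n+1) => c * (if (i : ℕ) = 0 then 1 else Zf z ((i : ℕ) - 1))) P
        = 0 := by
    intro c z
    set w' : Fin (n+1) → ℚ := fun i => if (i : ℕ) = 0 then 1 else Zf z ((i : ℕ) - 1) with hw'
    set q1 : Polynomial ℚ := aeval (fun i : Fin (n+1) => Polynomial.C (w' i) * Polynomial.X) P
      with hq1
    have hq1eval : ∀ r : ℚ, q1.eval r = eval (fun i => w' i * r) P := by
      intro r
      have hcomp := AlgHom.congr_fun (MvPolynomial.comp_aeval (R := ℚ)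
        (φ := (Polynomial.aeval r : Polynomial ℚ →ₐ[ℚ] ℚ))
        (f := fun i : Fin (n+1) => Polynomial.C (w' i) * Polynomial.X)) P
      simp only [AlgHom.coe_comp, Function.comp_apply, map_mul, Polynomial.aeval_C,
        Polynomial.aeval_X] at hcomp
      rw [hq1]
      rw [← Polynomial.coe_aeval_eq_eval]
      rw [hcomp]
      rw [aeval_eq_eval']
      simp [Algebra.algebraMap_self]
    have hinj : Function.Injective (fun k : ℕ => ((k : ℚ)) ^ d) := by
      intro a b hab
      have h1 : ((a ^ d : ℕ) : ℚ) = ((b ^ d : ℕ) : ℚ) := by push_cast; exact hab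
      have h2 : a ^ d = b ^ d := by exact_mod_cast h1
      exact Nat.pow_left_injective (by omega) h2
    have hmem : ∀ k : ℕ, ((k : ℚ)) ^ d ∈ {r : ℚ | q1.IsRoot r} := by
      intro k
      simp only [Set.mem_setOf_eq, Polynomial.IsRoot]
      rw [hq1eval]
      have h3 := key ((k : ℚ)) z
      have h4 : (fun i : Fin (n+1) => w' i * (k : ℚ) ^ d)
          = (fun i : Fin (n+1) => (k : ℚ) ^ d
              * (if (i : ℕ) = 0 then 1 else Zf z ((i : ℕ) - 1))) := by
        funext i; rw [hw']; ring
      rw [h4]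
      exact h3
    have hroots : {r : ℚ | q1.IsRoot r}.Infinite :=
      Set.infinite_of_injective_forall_mem hinj hmem
    have hq10 : q1 = 0 := Polynomial.eq_zero_of_infinite_isRoot q1 hroots
    have h5 := hq1eval c
    rw [hq10] at h5
    simp only [Polynomial.eval_zero] at h5
    have h6 : (fun i : Fin (n+1) => c * (if (i : ℕ) = 0 then 1 else Zf z ((i : ℕ) - 1)))
        = (fun i : Fin (n+1) => w' i * c) := by
      funext i; rw [hw']; ring
    rw [h6]
    exact h5.symm
  have hXP : (X 0 : MvPolynomial (Fin (n+1)) ℚ) * P = 0 := by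
    apply MvPolynomial.funext
    intro w
    rw [map_mul, eval_X, map_zero]
    by_cases hw0 : w 0 = 0
    · rw [hw0, zero_mul]
    · have h7 := key2 (w 0) (fun j : Fin n => w j.succ / w 0)
      have hfun : (fun i : Fin (n+1) => w 0 * (if (i : ℕ) = 0 then 1
          else Zf (fun j : Fin n => w j.succ / w 0) ((i : ℕ) - 1))) = w := by
        funext i
        by_cases h0 : (i : ℕ) = 0
        · rw [if_pos h0, mul_one]
          have : i = 0 := Fin.ext (by simpa using h0)
          rw [this]
        · rw [if_neg h0]
          have hlt : (i : ℕ) - 1 < n := by omega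
          rw [hZf]
          simp only [hlt, dif_pos]
          have hsucc : (⟨(i : ℕ) - 1, hlt⟩ : Fin n).succ = i := by
            apply Fin.ext; simp; omega
          rw [hsucc, mul_div_cancel₀ _ hw0]
      rw [hfun] at h7
      rw [h7, mul_zero]
  rcases mul_eq_zero.mp hXP with h | h
  · exact absurd h (X_ne_zero _)
  · exact h

lemma Ygen_lower {d : ℕ} (hd : 2 ≤ d) (v : ℕ → ℤ) (t : ℕ) (U : ℝ)
    (hU : 2 ≤ U) (hv0 : v 0 = (t : ℤ)) (hvU : ∀ j, 1 ≤ j → |((v j : ℤ) : ℝ)| ≤ U)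
    (ht : 2 * U ≤ (t : ℝ)) :
    ∀ i, 1 ≤ i → ((t : ℝ) / 2) ^ (d ^ (i - 1)) + U ≤ |((Ygen d v i : ℤ) : ℝ)| := by
  have hU0 : (0:ℝ) ≤ U := by linarith
  have ht0 : (0:ℝ) ≤ (t:ℝ) := by positivity
  intro i hi
  induction i, hi using Nat.le_induction with
  | base =>
    rw [Ygen_one, hv0]
    norm_num
    linarith
  | succ i hi ih =>
    have hie : i + 1 - 1 = i := rfl
    rw [Ygen_succ v (by omega)]
    set Y : ℝ := ((Ygen d v i : ℤ) : ℝ) with hY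
    set A : ℝ := ((t : ℝ) / 2) ^ (d ^ (i - 1)) with hA
    have hA0 : 0 ≤ A := by positivity
    have habs : |Y| ^ d - |((v i : ℤ) : ℝ)| ≤ |((v i - Ygen d v i ^ d : ℤ) : ℝ)| := by
      push_cast
      rw [← abs_pow]
      calc |Y ^ d| - |((v i : ℤ) : ℝ)| ≤ |Y ^ d - ((v i : ℤ) : ℝ)| := by
            exact abs_sub_abs_le_abs_sub _ _
        _ = |((v i : ℤ) : ℝ) - Y ^ d| := abs_sub_comm _ _
    have h1 : (A + U) ^ d ≤ |Y| ^ d := pow_le_pow_left₀ (by positivity) ih d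
    have h2 : A ^ d + U ^ d ≤ (A + U) ^ d := pow_add_pow_le hA0 hU0 (by omega)
    have h3 : 2 * U ≤ U ^ d := by
      calc 2 * U ≤ U * U := by nlinarith
        _ = U ^ 2 := by ring
        _ ≤ U ^ d := pow_le_pow_right₀ (by linarith) hd
    have h4 : A ^ d = ((t : ℝ) / 2) ^ (d ^ (i + 1 - 1)) := by
      rw [hA, ← pow_mul]
      congr 1
      rw [hie, ← pow_succ]
      congr 1
      omega
    have h5 : |((v i : ℤ) : ℝ)| ≤ U := hvU i hi
    calc ((t : ℝ) / 2) ^ (d ^ (i + 1 - 1)) + U = A ^ d + U := by rw [h4]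
      _ ≤ (A + U) ^ d - U := by nlinarith
      _ ≤ |Y| ^ d - |((v i : ℤ) : ℝ)| := by nlinarith
      _ ≤ _ := habs

lemma Ygen_inverse {n d : ℕ} {K : Type*} [Field K] (z : Fin n → K) (hn : 1 ≤ n)
    (vK : ℕ → K)
    (hv0 : vK 0 = z ⟨0, by omega⟩)
    (hvj : ∀ j (hj : 1 ≤ j) (hjn : j < n), vK j = z ⟨j, hjn⟩ + z ⟨j - 1, by omega⟩ ^ d) :
    ∀ i (hi : 1 ≤ i) (hin : i ≤ n), Ygen d vK i = z ⟨i - 1, by omega⟩ := by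
  intro i hi
  induction i, hi using Nat.le_induction with
  | base => intro _; rw [Ygen_one, hv0]
  | succ i hi ih =>
    intro hin
    rw [Ygen_succ vK (by omega), hvj i hi (by omega), ih (by omega)]
    simp

/-- **The bound `μ̄_d(ℙⁿ) ≤ d^{-(n-1)}` from Section 4 of the paper.**  For all `n ≥ 2`,
`d ≥ 2` there is a dominant degree-`d` rational self-map `φ` of `ℙⁿ` over `ℚ` (given by
coprime, algebraically independent degree-`d` forms) whose height expansion coefficient is at
most `d^{-(n-1)}`: in every nonempty Zariski open set there are points of arbitrarily large
height with `h(φ(x)) ≤ (d^{-(n-1)} + ε)·h(x)`. -/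
theorem mu_bar_Pn_le_inv_pow (n d : ℕ) (hn : 2 ≤ n) (hd : 2 ≤ d) :
    ∃ φ : Fin (n + 1) → MvPolynomial (Fin (n + 1)) ℚ,
      (∀ i, (φ i).IsHomogeneous d) ∧
      (∀ p : MvPolynomial (Fin (n + 1)) ℚ, (∀ i, p ∣ φ i) → IsUnit p) ∧
      AlgebraicIndependent ℚ φ ∧
      ∀ (K : Type) [Field K] [NumberField K]
        (g : MvPolynomial (Fin (n + 1)) K) (eg : ℕ), g ≠ 0 → g.IsHomogeneous eg →
        ∀ ε B : ℝ, 0 < ε → 0 < B →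
        ∃ (L : Type) (_ : Field L) (_ : NumberField L) (_ : Algebra K L)
          (x : Fin (n + 1) → L),
          x ≠ 0 ∧ (aeval x) g ≠ 0 ∧ (fun i => (aeval x) (φ i)) ≠ 0 ∧
          projHeight x > B ∧
          projHeight (fun i => (aeval x) (φ i)) ≤
            (((d : ℝ) ^ (n - 1))⁻¹ + ε) * projHeight x := by
  classical
  refine ⟨phiMap n d, fun i => phiMap_isHomogeneous hd i, phiMap_coprime hn hd,
    phiMap_algIndep hn hd, ?_⟩
  intro K _ _ g eg hg0 hgh ε B hε hB
  -- Step A: a point with w 0 ≠ 0 and g(w) ≠ 0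
  have hXg : (X 0 : MvPolynomial (Fin (n+1)) K) * g ≠ 0 := mul_ne_zero (X_ne_zero _) hg0
  have hexw : ∃ w : Fin (n+1) → K, eval w (X 0 * g) ≠ 0 := by
    by_contra h
    push_neg at h
    exact hXg (MvPolynomial.funext (fun w => by rw [h w, map_zero]))
  obtain ⟨w, hw⟩ := hexw
  rw [map_mul, eval_X] at hw
  have hw0 : w 0 ≠ 0 := fun h => hw (by rw [h, zero_mul])
  have hwg : eval w g ≠ 0 := fun h => hw (by rw [h, mul_zero])
  -- Step B: normalize so that the first coordinate is 1
  set Zf : (Fin n → K) → ℕ → K := fun z j => if h : j < n then z ⟨j, h⟩ else 0 with hZf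
  set z : Fin n → K := fun j => w j.succ / w 0 with hzdef
  set cone : Fin (n+1) → K := fun i => if (i : ℕ) = 0 then 1 else Zf z ((i : ℕ) - 1)
    with hcone
  have hfun : (fun i : Fin (n+1) => w 0 * cone i) = w := by
    funext i
    by_cases h0 : (i : ℕ) = 0
    · rw [hcone]
      simp only [if_pos h0, mul_one]
      have hi0 : i = 0 := Fin.ext (by simpa using h0)
      rw [hi0]
    · rw [hcone]
      simp only [if_neg h0]
      have hlt : (i : ℕ) - 1 < n := by omega
      rw [hZf]
      simp only [hlt, dif_pos]
      rw [hzdef]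
      simp only
      have hsucc : (⟨(i : ℕ) - 1, hlt⟩ : Fin n).succ = i := by
        apply Fin.ext; simp; omega
      rw [hsucc, mul_div_cancel₀ _ hw0]
  have hcone_ne : eval cone g ≠ 0 := by
    intro h
    apply hwg
    rw [← hfun, eval_scale hgh (w 0) cone, h, mul_zero]
  -- Step C: the composed polynomial G in n variables
  set vpoly : ℕ → MvPolynomial (Fin n) K := fun j => if h : j < n then X ⟨j, h⟩ else 0
    with hvpoly
  set ξpoly : Fin (n+1) → MvPolynomial (Fin n) K :=
    fun i => if (i : ℕ) = 0 then 1 else Ygen d vpoly (i : ℕ) with hxpoly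
  set G : MvPolynomial (Fin n) K := aeval ξpoly g with hGdef
  set aK : Fin n → K := fun j => if (j : ℕ) = 0 then z ⟨0, by omega⟩
    else z j + z ⟨(j : ℕ) - 1, by omega⟩ ^ d with haK
  have hvK0 : eval aK (vpoly 0) = z ⟨0, by omega⟩ := by
    rw [hvpoly]
    simp only [dif_pos (show 0 < n by omega), eval_X]
    rw [haK]
    simp
  have hvKj : ∀ j (hj : 1 ≤ j) (hjn : j < n),
      eval aK (vpoly j) = z ⟨j, hjn⟩ + z ⟨j - 1, by omega⟩ ^ d := by
    intro j hj hjn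
    rw [hvpoly]
    simp only [dif_pos hjn, eval_X]
    rw [haK]
    simp only [if_neg (show ¬((⟨j, hjn⟩ : Fin n) : ℕ) = 0 by simpa using by omega)]
  have hGne : G ≠ 0 := by
    intro h
    apply hcone_ne
    have h1 : eval aK G = eval (fun i => eval aK (ξpoly i)) g := eval_aeval' aK ξpoly g
    have h2 : (fun i : Fin (n+1) => eval aK (ξpoly i)) = cone := by
      funext i
      rw [hxpoly, hcone]
      by_cases h0 : (i : ℕ) = 0
      · simp [h0]
      · simp only [if_neg h0]
        have hlt : (i : ℕ) - 1 < n := by omega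
        have hev : ((eval aK : MvPolynomial (Fin n) K →+* K)) (Ygen d vpoly (i : ℕ))
            = Ygen d (fun j => eval aK (vpoly j)) (i : ℕ) := map_Ygen _ _ _
        rw [hev]
        have hinv := Ygen_inverse (d := d) z (by omega) (fun j => eval aK (vpoly j))
          hvK0 hvKj (i : ℕ) (by omega) (by omega)
        rw [hinv, hZf]
        simp only [hlt, dif_pos]
    rw [h2] at h1
    rw [← h1, h, map_zero]
  -- Step D: an integer point where G does not vanish
  obtain ⟨u', hu'⟩ := exists_int_eval_ne_zero n G hGne
  -- Step E: one-variable polynomial in the first coordinate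
  set q : Polynomial K := aeval (fun j : Fin n =>
    if (j : ℕ) = 0 then Polynomial.X else Polynomial.C ((u' j : ℤ) : K)) G with hqdef
  have hqeval : ∀ c : K, q.eval c
      = eval (fun j : Fin n => if (j : ℕ) = 0 then c else ((u' j : ℤ) : K)) G := by
    intro c
    have hcomp := AlgHom.congr_fun (MvPolynomial.comp_aeval (R := K)
      (φ := (Polynomial.aeval c : Polynomial K →ₐ[K] K))
      (f := fun j : Fin n =>
        if (j : ℕ) = 0 then Polynomial.X else Polynomial.C ((u' j : ℤ) : K))) G
    simp only [AlgHom.coe_comp, Function.comp_apply] at hcomp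
    rw [hqdef, ← Polynomial.coe_aeval_eq_eval, hcomp, aeval_eq_eval']
    have hfeq : (fun i : Fin n => Polynomial.aeval c
        (if (i : ℕ) = 0 then Polynomial.X else Polynomial.C ((u' i : ℤ) : K)))
        = fun j : Fin n => if (j : ℕ) = 0 then c else ((u' j : ℤ) : K) := by
      funext j
      by_cases h0 : (j : ℕ) = 0
      · simp [h0]
      · simp [h0]
    rw [hfeq]
  have hqne : q ≠ 0 := by
    intro h
    apply hu'
    have h1 := hqeval ((u' ⟨0, by omega⟩ : ℤ) : K)
    rw [h] at h1
    simp only [Polynomial.eval_zero] at h1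
    have h2 : (fun j : Fin n => if (j : ℕ) = 0 then ((u' ⟨0, by omega⟩ : ℤ) : K)
        else ((u' j : ℤ) : K)) = fun j : Fin n => ((u' j : ℤ) : K) := by
      funext j
      by_cases h0 : (j : ℕ) = 0
      · have : j = ⟨0, by omega⟩ := Fin.ext (by simpa using h0)
        rw [if_pos h0, this]
      · rw [if_neg h0]
    rw [h2] at h1
    exact h1.symm
  -- Step F: choose the large parameter t
  set U : ℝ := 2 ⊔ (⨆ j : Fin n, |((u' j : ℤ) : ℝ)|) with hUdef
  have hU2 : (2 : ℝ) ≤ U := le_sup_left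
  have hU0 : (0 : ℝ) ≤ U := by linarith
  have hUj : ∀ j : Fin n, |((u' j : ℤ) : ℝ)| ≤ U := by
    intro j
    refine le_trans (le_ciSup (f := fun j : Fin n => |((u' j : ℤ) : ℝ)|)
      (Set.Finite.bddAbove (Set.finite_range _)) j) le_sup_right
  obtain ⟨t, hT, hqt⟩ := exists_nat_ge_eval_ne_zero q hqne
    ((2 * U) ⊔ ((Real.exp B + 1) ⊔ Real.exp (Real.log 2 / ε)))
  have htU : 2 * U ≤ (t : ℝ) := le_trans le_sup_left hT
  have htB : Real.exp B + 1 ≤ (t : ℝ) := le_trans (le_trans le_sup_left le_sup_right) hT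
  have hte : Real.exp (Real.log 2 / ε) ≤ (t : ℝ) := le_trans (le_trans le_sup_right le_sup_right) hT
  have ht4 : (4 : ℝ) ≤ (t : ℝ) := by linarith
  have ht0 : (0 : ℝ) < (t : ℝ) := by linarith
  have ht1 : (1 : ℝ) < (t : ℝ) := by linarith
  -- Step G: the integer point
  set vZ : ℕ → ℤ := fun j => if h : j < n then (if j = 0 then (t : ℤ) else u' ⟨j, h⟩) else 0
    with hvZ
  set Ξ : Fin (n+1) → ℤ := fun i => if (i : ℕ) = 0 then 1 else Ygen d vZ (i : ℕ) with hXi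
  set x : Fin (n+1) → K := fun i => ((Ξ i : ℤ) : K) with hxdef
  set aF : Fin n → K := fun j => if (j : ℕ) = 0 then ((t : ℕ) : K) else ((u' j : ℤ) : K)
    with haF
  have hvZcast : ∀ j : ℕ, ((vZ j : ℤ) : K) = eval aF (vpoly j) := by
    intro j
    rw [hvZ, hvpoly]
    by_cases hjn : j < n
    · simp only [dif_pos hjn, eval_X, haF]
      by_cases h0 : j = 0
      · subst h0
        rw [if_pos rfl, if_pos (show ((⟨0, hjn⟩ : Fin n) : ℕ) = 0 from rfl)]
        push_cast
        ring
      · rw [if_neg h0, if_neg (show ¬((⟨j, hjn⟩ : Fin n) : ℕ) = 0 from h0)]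
    · simp [dif_neg hjn]
  have hxeval : ∀ i : Fin (n+1), x i = eval aF (ξpoly i) := by
    intro i
    rw [hxdef, hXi, hxpoly]
    by_cases h0 : (i : ℕ) = 0
    · simp [h0]
    · simp only [if_neg h0]
      have hc1 : ((Ygen d vZ (i : ℕ) : ℤ) : K)
          = Ygen d (fun j => ((vZ j : ℤ) : K)) (i : ℕ) := map_Ygen (Int.castRingHom K) _ _
      have hc2 : ((eval aF : MvPolynomial (Fin n) K →+* K)) (Ygen d vpoly (i : ℕ))
          = Ygen d (fun j => eval aF (vpoly j)) (i : ℕ) := map_Ygen _ _ _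
      rw [hc1, hc2]
      congr 1
      funext j
      exact hvZcast j
  -- g does not vanish at x
  have hgx : eval x g ≠ 0 := by
    have h1 : eval aF G = eval (fun i => eval aF (ξpoly i)) g := eval_aeval' aF ξpoly g
    have h2 : (fun i : Fin (n+1) => eval aF (ξpoly i)) = x := by
      funext i; exact (hxeval i).symm
    have h3 : q.eval ((t : ℕ) : K) = eval aF G := by
      rw [hqeval]
    rw [h2] at h1
    rw [h3, h1] at hqt
    exact hqt
  -- Step H: the values of φ at x
  set Φ : Fin (n+1) → ℤ := fun i => if (i : ℕ) = 0 then 1 else vZ ((i : ℕ) - 1) with hPhi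
  have hphix : ∀ i, aeval x (phiMap n d i) = ((Φ i : ℤ) : K) := by
    intro i
    have hx2 : x = fun j : Fin (n+1) => if (j : ℕ) = 0 then (1 : K)
        else (1 : K) * Ygen d (fun m => ((vZ m : ℤ) : K)) (j : ℕ) := by
      funext j
      rw [hxdef, hXi]
      by_cases h0 : (j : ℕ) = 0
      · simp [h0]
      · simp only [if_neg h0, one_mul]
        exact map_Ygen (Int.castRingHom K) _ _
    rw [hx2, aeval_phiMap hd, one_pow, one_mul, hPhi]
    by_cases h0 : (i : ℕ) = 0
    · simp [h0]
    · simp [h0]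
  -- Step I: heights
  have hXi0 : Ξ 0 = 1 := by rw [hXi]; simp
  have hPhi0 : Φ 0 = 1 := by rw [hPhi]; simp
  have hxne : x ≠ 0 := by
    intro h
    have h1 := congrFun h 0
    rw [hxdef] at h1
    simp only [hXi0, Int.cast_one, Pi.zero_apply] at h1
    exact one_ne_zero h1
  have hphifun : (fun i => aeval x (phiMap n d i)) = fun i => ((Φ i : ℤ) : K) := by
    funext i; exact hphix i
  have hphine : (fun i => aeval x (phiMap n d i)) ≠ 0 := by
    rw [hphifun]
    intro h
    have h1 := congrFun h 0
    simp only [hPhi0, Int.cast_one, Pi.zero_apply] at h1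
    exact one_ne_zero h1
  have hhx : projHeight x = Real.log (⨆ i, |(Ξ i : ℝ)|) := by
    rw [hxdef]; exact projHeight_intCast Ξ 0 hXi0
  have hhphi : projHeight (fun i => aeval x (phiMap n d i))
      = Real.log (⨆ i, |(Φ i : ℝ)|) := by
    rw [hphifun]; exact projHeight_intCast Φ 0 hPhi0
  -- bounds on vZ
  have hvZ0 : vZ 0 = (t : ℤ) := by rw [hvZ]; simp [show 0 < n by omega]
  have hvZabs : ∀ j, 1 ≤ j → |((vZ j : ℤ) : ℝ)| ≤ U := by
    intro j hj
    rw [hvZ]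
    by_cases hjn : j < n
    · simp only [dif_pos hjn, if_neg (by omega : ¬ j = 0)]
      exact hUj _
    · simp only [dif_neg hjn]
      norm_num; linarith
  have hvZle : ∀ j, |((vZ j : ℤ) : ℝ)| ≤ (t : ℝ) := by
    intro j
    by_cases hj : j = 0
    · rw [hj, hvZ0]
      push_cast
      rw [abs_of_nonneg (by positivity)]
    · exact le_trans (hvZabs j (by omega)) (by linarith)
  -- the sup of |Φ| equals t
  have hbddPhi : BddAbove (Set.range fun i => |(Φ i : ℝ)|) :=
    Set.Finite.bddAbove (Set.finite_range _)
  have hMPhi : (⨆ i, |(Φ i : ℝ)|) = (t : ℝ) := by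
    apply le_antisymm
    · apply ciSup_le
      intro i
      rw [hPhi]
      by_cases h0 : (i : ℕ) = 0
      · simp only [if_pos h0, Int.cast_one, abs_one]
        linarith
      · simp only [if_neg h0]
        exact hvZle _
    · have h1 := le_ciSup hbddPhi (⟨1, by omega⟩ : Fin (n+1))
      have h2 : Φ ⟨1, by omega⟩ = (t : ℤ) := by
        rw [hPhi]
        simp only [if_neg (show ¬((⟨1, by omega⟩ : Fin (n+1)) : ℕ) = 0 by simp)]
        exact hvZ0
      rw [h2] at h1
      calc (t : ℝ) = |((t : ℤ) : ℝ)| := by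
            push_cast; rw [abs_of_nonneg (by positivity)]
        _ ≤ _ := h1
  -- lower bounds for the sup of |Ξ|
  have hbddXi : BddAbove (Set.range fun i => |(Ξ i : ℝ)|) :=
    Set.Finite.bddAbove (Set.finite_range _)
  have hMx1 : (t : ℝ) ≤ (⨆ i, |(Ξ i : ℝ)|) := by
    have h1 := le_ciSup hbddXi (⟨1, by omega⟩ : Fin (n+1))
    have h2 : Ξ ⟨1, by omega⟩ = (t : ℤ) := by
      rw [hXi]
      simp only [if_neg (show ¬((⟨1, by omega⟩ : Fin (n+1)) : ℕ) = 0 by simp)]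
      exact (Ygen_one vZ).trans hvZ0
    rw [h2] at h1
    calc (t : ℝ) = |((t : ℤ) : ℝ)| := by push_cast; rw [abs_of_nonneg (by positivity)]
      _ ≤ _ := h1
  have hMx2 : ((t : ℝ) / 2) ^ (d ^ (n - 1)) ≤ (⨆ i, |(Ξ i : ℝ)|) := by
    have hgrow := Ygen_lower hd vZ t U hU2 hvZ0 hvZabs htU n (by omega)
    have h1 := le_ciSup hbddXi (⟨n, by omega⟩ : Fin (n+1))
    have h2 : Ξ ⟨n, by omega⟩ = Ygen d vZ n := by
      rw [hXi]
      simp only [if_neg (show ¬((⟨n, by omega⟩ : Fin (n+1)) : ℕ) = 0 by simp; omega)]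
    rw [h2] at h1
    calc ((t : ℝ) / 2) ^ (d ^ (n - 1)) ≤ |((Ygen d vZ n : ℤ) : ℝ)| := by linarith
      _ ≤ _ := h1
  -- final numeric assembly
  set Mx : ℝ := ⨆ i, |(Ξ i : ℝ)| with hMx
  have hMxpos : (0 : ℝ) < Mx := lt_of_lt_of_le ht0 hMx1
  have hlogt_le : Real.log (t : ℝ) ≤ Real.log Mx :=
    Real.log_le_log ht0 hMx1
  have hlogt_pos : 0 < Real.log (t : ℝ) := Real.log_pos ht1
  have hlog2 : Real.log 2 ≤ ε * Real.log (t : ℝ) := by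
    have h1 : Real.log 2 / ε ≤ Real.log (t : ℝ) := by
      calc Real.log 2 / ε = Real.log (Real.exp (Real.log 2 / ε)) := (Real.log_exp _).symm
        _ ≤ Real.log (t : ℝ) := Real.log_le_log (Real.exp_pos _) hte
    calc Real.log 2 = (Real.log 2 / ε) * ε := by field_simp
      _ ≤ Real.log (t : ℝ) * ε := mul_le_mul_of_nonneg_right h1 (le_of_lt hε)
      _ = ε * Real.log (t : ℝ) := mul_comm _ _
  set D : ℝ := (d : ℝ) ^ (n - 1) with hD
  have hDpos : (0 : ℝ) < D := by positivity
  have hgrow2 : D * (Real.log (t : ℝ) - Real.log 2) ≤ Real.log Mx := by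
    have hpos : (0 : ℝ) < ((t : ℝ) / 2) ^ (d ^ (n - 1)) := by positivity
    have h1 : Real.log (((t : ℝ) / 2) ^ (d ^ (n - 1))) ≤ Real.log Mx :=
      Real.log_le_log hpos hMx2
    rw [Real.log_pow, Real.log_div (by linarith) (by norm_num)] at h1
    calc D * (Real.log (t : ℝ) - Real.log 2)
        = ((d ^ (n - 1) : ℕ) : ℝ) * (Real.log (t : ℝ) - Real.log 2) := by
          rw [hD]; push_cast; ring
      _ ≤ Real.log Mx := h1
  have hinv : Real.log (t : ℝ) - Real.log 2 ≤ D⁻¹ * Real.log Mx := by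
    have h1 : D⁻¹ * (D * (Real.log (t : ℝ) - Real.log 2)) ≤ D⁻¹ * Real.log Mx :=
      mul_le_mul_of_nonneg_left hgrow2 (by positivity)
    rw [← mul_assoc, inv_mul_cancel₀ (ne_of_gt hDpos), one_mul] at h1
    exact h1
  have heps : ε * Real.log (t : ℝ) ≤ ε * Real.log Mx :=
    mul_le_mul_of_nonneg_left hlogt_le (le_of_lt hε)
  refine ⟨K, inferInstance, inferInstance, inferInstance, x, hxne, ?_, hphine, ?_, ?_⟩
  · rw [aeval_eq_eval']
    exact hgx
  · rw [hhx]
    calc B = Real.log (Real.exp B) := (Real.log_exp B).symm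
      _ < Real.log (t : ℝ) := Real.log_lt_log (Real.exp_pos B) (by linarith)
      _ ≤ Real.log Mx := hlogt_le
  · rw [hhphi, hhx, hMPhi]
    have : Real.log (t : ℝ) ≤ D⁻¹ * Real.log Mx + ε * Real.log Mx := by linarith
    calc Real.log (t : ℝ) ≤ D⁻¹ * Real.log Mx + ε * Real.log Mx := this
      _ = (D⁻¹ + ε) * Real.log Mx := by ring
end
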